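/- Assume additionally ∑_{k=1}^∞ c_k < +∞ and fix ξ ∈ [0, 1/2). There exist constants C > 0 and A₀ > 0 such that for every a > A₀ the function ℓ_a has a zero μ⁺(a) in the upper half-plane satisfying |Re μ⁺(a) + (1/2) a^{−2(1−ξ)} ∑_{j=1}^∞ c_j| ≤ C a^{−2(1−ξ)} and |Im μ⁺(a) − a| ≤ C a^{−(1−2ξ)}; moreover the complex conjugate of μ⁺(a) is also a zero of ℓ_a. -/

import Mathlib

open Complex Metric

private lemma re_cpow_half14 {z : ℂ} (hz : 0 < z.re) :
    Real.sqrt (norm z) / 2 ≤ (z ^ (2⁻¹ : ℂ)).re := by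
  have hz0 : z ≠ 0 := by intro h; rw [h] at hz; simp at hz
  rw [Complex.cpow_def_of_ne_zero hz0, Complex.exp_re]
  have hre : (Complex.log z * 2⁻¹).re = Real.log (norm z) / 2 := by
    simp [Complex.mul_re, Complex.log_re]; ring
  have him : (Complex.log z * 2⁻¹).im = Complex.arg z / 2 := by
    simp [Complex.mul_im, Complex.log_im]; ring
  rw [hre, him]
  have habs : 0 < norm z := norm_pos_iff.mpr hz0
  have h1 : Real.exp (Real.log (norm z) / 2) = Real.sqrt (norm z) := by
    rw [← Real.log_sqrt habs.le, Real.exp_log (Real.sqrt_pos.mpr habs)]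
  rw [h1]
  have harg : |Complex.arg z| < Real.pi / 2 :=
    Complex.abs_arg_lt_pi_div_two_iff.mpr (Or.inl hz)
  have hcos : (1:ℝ)/2 ≤ Real.cos (Complex.arg z / 2) := by
    have h2 : |Complex.arg z / 2| ≤ Real.pi / 4 := by
      rw [abs_div, abs_of_pos (by norm_num : (0:ℝ) < 2)]
      linarith [harg.le]
    have h3 : Real.cos (Real.pi/4) ≤ Real.cos (Complex.arg z / 2) := by
      rw [← Real.cos_abs (Complex.arg z / 2)]
      apply Real.cos_le_cos_of_nonneg_of_le_pi (abs_nonneg _)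
      · linarith [Real.pi_pos]
      · exact h2
    rw [Real.cos_pi_div_four] at h3
    nlinarith [Real.sq_sqrt (by norm_num : (0:ℝ) ≤ 2), Real.sqrt_nonneg 2]
  have hs := Real.sqrt_nonneg (norm z)
  nlinarith

private lemma cpow_half_sq14 (z : ℂ) : (z ^ (2⁻¹ : ℂ)) ^ 2 = z := by
  have := Complex.cpow_nat_inv_pow z (n := 2) (by norm_num)
  simpa using this

private lemma contr_fix14 (K : Set ℂ) (hK : IsClosed K) (hne : K.Nonempty) (f : ℂ → ℂ)
    (hmap : ∀ x ∈ K, f x ∈ K)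
    (hlip : ∀ x ∈ K, ∀ y ∈ K, dist (f x) (f y) ≤ (1/2) * dist x y) :
    ∃ μ ∈ K, f μ = μ := by
  haveI : CompleteSpace K := hK.completeSpace_coe
  haveI : Nonempty K := hne.to_subtype
  set g : K → K := fun x => ⟨f x, hmap x x.2⟩ with hg
  have hcw : ContractingWith (1/2 : NNReal) g := by
    constructor
    · exact_mod_cast (by norm_num : ((1:ℝ)/2) < 1)
    · apply LipschitzWith.of_dist_le_mul
      intro x y
      have := hlip x x.2 y y.2
      simpa [Subtype.dist_eq, hg] using this
  set p := ContractingWith.fixedPoint g hcw with hp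
  refine ⟨p.1, p.2, ?_⟩
  have hfp : g p = p := ContractingWith.fixedPoint_isFixedPt hcw
  exact congrArg Subtype.val hfp

set_option maxHeartbeats 1000000 in
theorem stmt_14
    (c γs : ℕ → ℝ)
    (hc : ∀ j, 0 < c j)
    (hγ0 : 0 < γs 0)
    (hγmono : StrictMono γs)
    (hγtop : Filter.Tendsto γs Filter.atTop Filter.atTop)
    (hSsum : Summable fun j => c j / γs j)
    (hS : (∑' j, c j / γs j) < 1)
    (hcsum : Summable c)
    (ξ : ℝ) (hξ0 : 0 ≤ ξ) (hξ1 : ξ < 1 / 2)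
    (ℓ : ℝ → ℂ → ℂ)
    (hℓ : ∀ a : ℝ, ∀ ζ : ℂ, ℓ a ζ = ζ ^ 2 + (a : ℂ) ^ 2
        - ((a ^ (2 * ξ) : ℝ) : ℂ) * ∑' k, (c k : ℂ) / (ζ + (γs k : ℂ))) :
    ∃ C : ℝ, 0 < C ∧ ∃ A₀ : ℝ, 0 < A₀ ∧ ∀ a : ℝ, A₀ < a →
      ∃ μ : ℂ, ℓ a μ = 0 ∧ 0 < μ.im ∧
        |μ.re + (1 / 2) * a ^ (-(2 * (1 - ξ))) * ∑' j, c j| ≤ C * a ^ (-(2 * (1 - ξ))) ∧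
        |μ.im - a| ≤ C * a ^ (-(1 - 2 * ξ)) ∧
        ℓ a ((starRingEnd ℂ) μ) = 0 := by
  set T := ∑' j, c j with hTdef
  have hT : 0 < T := Summable.tsum_pos hcsum (fun i => (hc i).le) 0 (hc 0)
  refine ⟨3*(T+1), by positivity, 16*(T+1)+16, by positivity, fun a ha => ?_⟩
  have ha0 : 0 < a := by nlinarith
  have ha1 : (1:ℝ) ≤ a := by nlinarith
  have ha2 : (2:ℝ) ≤ a := by nlinarith
  have haT : 16*T ≤ a := by nlinarith
  have haTa : 2*T ≤ a := by nlinarith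
  have haT2 : 16*T ≤ a^2 := by nlinarith
  set r : ℝ := a ^ (2*ξ) with hrdef
  have hr0 : 0 < r := Real.rpow_pos_of_pos ha0 _
  have hrle : r ≤ a := by
    calc r = a ^ (2*ξ) := hrdef
    _ ≤ a ^ (1:ℝ) := Real.rpow_le_rpow_of_exponent_le ha1 (by linarith)
    _ = a := Real.rpow_one a
  set F : ℂ → ℂ := fun ζ => ∑' k, (c k : ℂ) / (ζ + (γs k : ℂ)) with hFdef
  set Kb : Set ℂ := Metric.closedBall (Complex.I * a) 1 with hKdef
  -- basic membership facts
  have him : ∀ ζ ∈ Kb, a - 1 ≤ ζ.im := by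
    intro ζ hζ
    have h1 : norm (ζ - Complex.I * a) ≤ 1 := by
      simpa [hKdef, Metric.mem_closedBall, Complex.dist_eq] using hζ
    have h2 : |ζ.im - a| ≤ 1 := by
      have h3 := Complex.abs_im_le_norm (ζ - Complex.I * a)
      have h4 : (ζ - Complex.I * a).im = ζ.im - a := by simp
      rw [h4] at h3
      linarith
    have := (abs_le.mp h2).1
    linarith
  have hden : ∀ ζ ∈ Kb, ∀ k : ℕ, a/2 ≤ norm (ζ + (γs k : ℂ)) := by
    intro ζ hζ k
    have h3 := him ζ hζ
    have h4 : (ζ + (γs k : ℂ)).im = ζ.im := by simp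
    calc a/2 ≤ a - 1 := by linarith
    _ ≤ ζ.im := h3
    _ ≤ |(ζ + (γs k : ℂ)).im| := by rw [h4]; exact le_abs_self _
    _ ≤ norm _ := Complex.abs_im_le_norm _
  have hne0 : ∀ ζ ∈ Kb, ∀ k : ℕ, ζ + (γs k : ℂ) ≠ 0 := by
    intro ζ hζ k h
    have := hden ζ hζ k
    rw [h] at this
    simp at this
    linarith
  have hnorm_term : ∀ ζ ∈ Kb, ∀ k : ℕ,
      ‖(c k : ℂ) / (ζ + (γs k : ℂ))‖ ≤ 2/a * c k := by
    intro ζ hζ k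
    have h1 : ‖(c k : ℂ) / (ζ + (γs k : ℂ))‖
        = c k / norm (ζ + (γs k : ℂ)) := by
      rw [norm_div, Complex.norm_real, Real.norm_eq_abs,
        abs_of_pos (hc k)]
    rw [h1]
    have h2 := hden ζ hζ k
    have h3 : c k / norm (ζ + (γs k : ℂ)) ≤ c k / (a/2) :=
      div_le_div_of_nonneg_left (hc k).le (by linarith) h2
    calc c k / norm (ζ + (γs k : ℂ)) ≤ c k / (a/2) := h3
    _ = 2/a * c k := by field_simp
  have hsumm : ∀ ζ ∈ Kb, Summable (fun k => (c k : ℂ) / (ζ + (γs k : ℂ))) := by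
    intro ζ hζ
    apply Summable.of_norm
    exact Summable.of_nonneg_of_le (fun k => norm_nonneg _) (hnorm_term ζ hζ)
      (hcsum.mul_left (2/a))
  have hFbound : ∀ ζ ∈ Kb, norm (F ζ) ≤ 2*T/a := by
    intro ζ hζ
    have h1 : ‖F ζ‖ ≤ ∑' k, ‖(c k : ℂ) / (ζ + (γs k : ℂ))‖ := by
      rw [hFdef]
      exact norm_tsum_le_tsum_norm (Summable.of_nonneg_of_le (fun k => norm_nonneg _)
        (hnorm_term ζ hζ) (hcsum.mul_left (2/a)))
    have h2 : (∑' k, ‖(c k : ℂ) / (ζ + (γs k : ℂ))‖) ≤ ∑' k, 2/a * c k :=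
      Summable.tsum_le_tsum (hnorm_term ζ hζ)
        (Summable.of_nonneg_of_le (fun k => norm_nonneg _) (hnorm_term ζ hζ)
          (hcsum.mul_left (2/a))) (hcsum.mul_left (2/a))
    have h3 : (∑' k, 2/a * c k) = 2/a * T := by rw [tsum_mul_left, hTdef]
    calc ‖F ζ‖ ≤ ∑' k, ‖(c k : ℂ) / (ζ + (γs k : ℂ))‖ := h1
    _ ≤ 2/a * T := by rw [← h3]; exact h2
    _ = 2*T/a := by ring
  have hFdiff : ∀ ζ ∈ Kb, ∀ ζ' ∈ Kb,
      norm (F ζ - F ζ') ≤ 4*T/a^2 * norm (ζ - ζ') := by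
    intro ζ hζ ζ' hζ'
    set D := norm (ζ - ζ') with hD
    have heq : F ζ - F ζ' = ∑' k, ((c k : ℂ) / (ζ + (γs k : ℂ))
        - (c k : ℂ) / (ζ' + (γs k : ℂ))) := by
      rw [hFdef]
      exact (Summable.tsum_sub (hsumm ζ hζ) (hsumm ζ' hζ')).symm
    have hterm : ∀ k : ℕ, ‖(c k : ℂ) / (ζ + (γs k : ℂ)) - (c k : ℂ) / (ζ' + (γs k : ℂ))‖
        ≤ (4/a^2 * D) * c k := by
      intro k
      have h1 : (c k : ℂ) / (ζ + (γs k : ℂ)) - (c k : ℂ) / (ζ' + (γs k : ℂ))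
          = (c k : ℂ) * (ζ' - ζ) / ((ζ + (γs k : ℂ)) * (ζ' + (γs k : ℂ))) := by
        field_simp [hne0 ζ hζ k, hne0 ζ' hζ' k]
        ring
      rw [h1, norm_div, norm_mul, Complex.norm_real, Real.norm_eq_abs,
        abs_of_pos (hc k), norm_mul]
      have h2 := hden ζ hζ k
      have h3 := hden ζ' hζ' k
      have h4 : norm (ζ' - ζ) = D := by rw [hD]; exact norm_sub_rev ζ' ζ
      rw [h4]
      have hD0 : 0 ≤ D := norm_nonneg _
      have h5 : a/2 * (a/2) ≤ norm (ζ + (γs k : ℂ)) * norm (ζ' + (γs k : ℂ)) := by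
        apply mul_le_mul h2 h3 (by linarith) (norm_nonneg _)
      have h6 : (0:ℝ) < a/2 * (a/2) := by positivity
      calc c k * D / (norm (ζ + (γs k : ℂ)) * norm (ζ' + (γs k : ℂ)))
          ≤ c k * D / (a/2 * (a/2)) := by
            apply div_le_div_of_nonneg_left (mul_nonneg (hc k).le hD0) h6 h5
      _ = (4/a^2 * D) * c k := by field_simp; ring
    have hsummN : Summable (fun k => ((4/a^2 * D) * c k)) := hcsum.mul_left _
    have h7 : ‖F ζ - F ζ'‖ ≤ ∑' k, ((4/a^2 * D) * c k) := by
      rw [heq]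
      calc ‖∑' k, ((c k : ℂ) / (ζ + (γs k : ℂ)) - (c k : ℂ) / (ζ' + (γs k : ℂ)))‖
          ≤ ∑' k, ‖(c k : ℂ) / (ζ + (γs k : ℂ)) - (c k : ℂ) / (ζ' + (γs k : ℂ))‖ :=
            norm_tsum_le_tsum_norm (Summable.of_nonneg_of_le (fun k => norm_nonneg _)
              hterm hsummN)
      _ ≤ ∑' k, ((4/a^2 * D) * c k) := Summable.tsum_le_tsum hterm
            (Summable.of_nonneg_of_le (fun k => norm_nonneg _) hterm hsummN) hsummN
    have h8 : (∑' k, ((4/a^2 * D) * c k)) = (4/a^2 * D) * T := by rw [tsum_mul_left, hTdef]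
    calc ‖F ζ - F ζ'‖ ≤ (4/a^2 * D) * T := by rw [← h8]; exact h7
    _ = 4*T/a^2 * D := by ring
  -- the square-root map
  set z : ℂ → ℂ := fun ζ => (a:ℂ)^2 - (r:ℂ) * F ζ with hzdef
  set g : ℂ → ℂ := fun ζ => Complex.I * (z ζ) ^ (2⁻¹ : ℂ) with hgdef
  have hwbound : ∀ ζ ∈ Kb, norm ((r:ℂ) * F ζ) ≤ 2*T*r/a := by
    intro ζ hζ
    rw [norm_mul, Complex.norm_real, Real.norm_eq_abs, abs_of_pos hr0]
    calc r * norm (F ζ) ≤ r * (2*T/a) :=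
      mul_le_mul_of_nonneg_left (hFbound ζ hζ) hr0.le
    _ = 2*T*r/a := by ring
  have hwbound2 : ∀ ζ ∈ Kb, norm ((r:ℂ) * F ζ) ≤ 2*T := by
    intro ζ hζ
    calc norm ((r:ℂ) * F ζ) ≤ 2*T*r/a := hwbound ζ hζ
    _ ≤ 2*T := by rw [div_le_iff₀ ha0]; nlinarith
  have hzre : ∀ ζ ∈ Kb, a^2/2 ≤ (z ζ).re := by
    intro ζ hζ
    have h1 : (z ζ).re = a^2 - ((r:ℂ) * F ζ).re := by
      rw [hzdef]; simp [← Complex.ofReal_pow]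
    have h2 : |((r:ℂ) * F ζ).re| ≤ 2*T := le_trans (Complex.abs_re_le_norm _) (hwbound2 ζ hζ)
    have h3 := (abs_le.mp h2).2
    rw [h1]
    nlinarith
  have hzre0 : ∀ ζ ∈ Kb, 0 < (z ζ).re := by
    intro ζ hζ
    have := hzre ζ hζ
    nlinarith
  have hzabs : ∀ ζ ∈ Kb, a^2/2 ≤ norm (z ζ) := by
    intro ζ hζ
    exact le_trans (hzre ζ hζ) (Complex.re_le_norm _)
  have hsre : ∀ ζ ∈ Kb, a/4 ≤ ((z ζ) ^ (2⁻¹ : ℂ)).re := by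
    intro ζ hζ
    have h1 := re_cpow_half14 (hzre0 ζ hζ)
    have h2 : a/2 ≤ Real.sqrt (norm (z ζ)) := by
      rw [show a/2 = Real.sqrt ((a/2)^2) from (Real.sqrt_sq (by linarith)).symm]
      apply Real.sqrt_le_sqrt
      have := hzabs ζ hζ
      nlinarith
    linarith
  have hssq : ∀ ζ : ℂ, ((z ζ) ^ (2⁻¹ : ℂ)) ^ 2 = z ζ := fun ζ => cpow_half_sq14 (z ζ)
  -- the map g sends Kb into Kb, with a quantitative bound
  have hgbound : ∀ ζ ∈ Kb, norm (g ζ - Complex.I * a) ≤ 2*T*r/a^2 := by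
    intro ζ hζ
    set s := (z ζ) ^ (2⁻¹ : ℂ) with hs
    have h1 : g ζ - Complex.I * a = Complex.I * (s - a) := by rw [hgdef]; ring
    have h2 : (s - a) * (s + a) = - ((r:ℂ) * F ζ) := by
      have h3 : (s - a) * (s + a) = s^2 - (a:ℂ)^2 := by ring
      rw [h3, hssq ζ, hzdef]; ring
    have h4 : norm (s - a) * norm (s + a) = norm ((r:ℂ) * F ζ) := by
      rw [← norm_mul, h2, norm_neg]
    have h5 : a ≤ norm (s + a) := by
      have h6 : a/4 + a ≤ (s + a).re := by
        have hsr : a/4 ≤ s.re := hsre ζ hζ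
        simp only [Complex.add_re, Complex.ofReal_re]
        linarith
      have h7 := Complex.re_le_norm (s + a)
      linarith
    have h8 := hwbound ζ hζ
    rw [h1, norm_mul, Complex.norm_I, one_mul]
    have h9 : norm (s - a) * a ≤ 2*T*r/a := by
      calc norm (s - a) * a ≤ norm (s - a) * norm (s + a) :=
        mul_le_mul_of_nonneg_left h5 (norm_nonneg _)
      _ = norm ((r:ℂ) * F ζ) := h4
      _ ≤ 2*T*r/a := h8
    have h10 : norm (s - a) ≤ (2*T*r/a)/a := by
      rw [le_div_iff₀ ha0]; exact h9
    calc norm (s - a) ≤ (2*T*r/a)/a := h10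
    _ = 2*T*r/a^2 := by rw [div_div, ← pow_two]
  have hgsmall : 2*T*r/a^2 ≤ 1 := by
    have h1 : 2*T*r ≤ 2*T*a := by nlinarith
    have h2 : 2*T*a ≤ a^2 := by nlinarith
    rw [div_le_one (by positivity)]
    linarith
  have hgmap : ∀ ζ ∈ Kb, g ζ ∈ Kb := by
    intro ζ hζ
    rw [hKdef, Metric.mem_closedBall, Complex.dist_eq]
    exact le_trans (hgbound ζ hζ) hgsmall
  -- contraction
  have hglip : ∀ ζ ∈ Kb, ∀ ζ' ∈ Kb, dist (g ζ) (g ζ') ≤ (1/2) * dist ζ ζ' := by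
    intro ζ hζ ζ' hζ'
    set s := (z ζ) ^ (2⁻¹ : ℂ) with hs
    set s' := (z ζ') ^ (2⁻¹ : ℂ) with hs'
    rw [Complex.dist_eq, Complex.dist_eq]
    have h1 : g ζ - g ζ' = Complex.I * (s - s') := by rw [hgdef]; ring
    have h2 : (s - s') * (s + s') = (r:ℂ) * (F ζ' - F ζ) := by
      have h3 : (s - s') * (s + s') = s^2 - s'^2 := by ring
      rw [h3, hs, hs', hssq ζ, hssq ζ', hzdef]; ring
    have h5 : a/2 ≤ norm (s + s') := by
      have h6 : a/4 + a/4 ≤ (s + s').re := by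
        have hsr : a/4 ≤ s.re := hsre ζ hζ
        have hsr' : a/4 ≤ s'.re := hsre ζ' hζ'
        simp only [Complex.add_re]
        linarith
      have h7 := Complex.re_le_norm (s + s')
      linarith
    have h8 : norm ((r:ℂ) * (F ζ' - F ζ)) ≤ 4*T/a * norm (ζ - ζ') := by
      rw [norm_mul, Complex.norm_real, Real.norm_eq_abs, abs_of_pos hr0]
      have h9 := hFdiff ζ' hζ' ζ hζ
      have h10 : norm (ζ' - ζ) = norm (ζ - ζ') := norm_sub_rev ζ' ζ
      rw [h10] at h9
      calc r * norm (F ζ' - F ζ) ≤ r * (4*T/a^2 * norm (ζ - ζ')) :=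
        mul_le_mul_of_nonneg_left h9 hr0.le
      _ ≤ a * (4*T/a^2 * norm (ζ - ζ')) := by
          apply mul_le_mul_of_nonneg_right hrle
          positivity
      _ = 4*T/a * norm (ζ - ζ') := by field_simp
    have h11 : norm (s - s') * norm (s + s') = norm ((r:ℂ) * (F ζ' - F ζ)) := by
      rw [← norm_mul, h2]
    have h12 : norm (s - s') * (a/2) ≤ 4*T/a * norm (ζ - ζ') := by
      calc norm (s - s') * (a/2) ≤ norm (s - s') * norm (s + s') :=
        mul_le_mul_of_nonneg_left h5 (norm_nonneg _)
      _ = norm ((r:ℂ) * (F ζ' - F ζ)) := h11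
      _ ≤ 4*T/a * norm (ζ - ζ') := h8
    rw [h1, norm_mul, Complex.norm_I, one_mul]
    have h13 : 8*T/a^2 ≤ 1/2 := by
      rw [div_le_div_iff₀ (by positivity : (0:ℝ) < a^2) (by norm_num : (0:ℝ) < 2)]
      nlinarith
    have hd0 : (0:ℝ) ≤ norm (ζ - ζ') := norm_nonneg _
    have h14 : norm (s - s') ≤ 8*T/a^2 * norm (ζ - ζ') := by
      have ha20 : (0:ℝ) < a/2 := by linarith
      rw [← le_div_iff₀ ha20] at h12
      calc norm (s - s') ≤ 4*T/a * norm (ζ - ζ') / (a/2) := h12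
      _ = 8*T/a^2 * norm (ζ - ζ') := by field_simp; ring
    calc norm (s - s') ≤ 8*T/a^2 * norm (ζ - ζ') := h14
    _ ≤ 1/2 * norm (ζ - ζ') := mul_le_mul_of_nonneg_right h13 hd0
  -- fixed point
  obtain ⟨μ, hμK, hμfix⟩ := contr_fix14 Kb (by rw [hKdef]; exact Metric.isClosed_closedBall)
    ⟨Complex.I * a, by rw [hKdef]; exact Metric.mem_closedBall_self (by norm_num)⟩
    g hgmap hglip
  -- μ is a zero of the symbol
  have hzero : μ^2 + (a:ℂ)^2 - (r:ℂ) * F μ = 0 := by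
    have h1 : μ^2 = - z μ := by
      conv_lhs => rw [← hμfix]
      rw [hgdef]
      simp only [mul_pow, hssq μ, Complex.I_sq]
      ring
    rw [h1, hzdef]; ring
  have hl0 : ℓ a μ = 0 := by
    rw [hℓ a μ]
    have h1 : (∑' k, (c k : ℂ) / (μ + (γs k : ℂ))) = F μ := by rw [hFdef]
    rw [h1, ← hrdef]
    exact hzero
  -- quantitative bounds
  have hmu : norm (μ - Complex.I * a) ≤ 2*T*r/a^2 := by
    rw [← hμfix]; exact hgbound μ hμK
  set P := a ^ (-(2*(1-ξ))) with hPdef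
  have hP : P = r / a^2 := by
    rw [hPdef, show -(2*(1-ξ)) = 2*ξ + (-2:ℝ) by ring, Real.rpow_add ha0, hrdef]
    rw [show ((-2:ℝ)) = -((2:ℕ):ℝ) by norm_num, Real.rpow_neg ha0.le, Real.rpow_natCast]
    ring
  have hP0 : 0 < P := by rw [hP]; positivity
  set Q := a ^ (-(1-2*ξ)) with hQdef
  have hPQ : P ≤ Q := by
    rw [hPdef, hQdef]
    apply Real.rpow_le_rpow_of_exponent_le ha1
    linarith
  have hQ0 : 0 < Q := lt_of_lt_of_le hP0 hPQ
  have hmuP : norm (μ - Complex.I * a) ≤ 2*T*P := by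
    rw [hP]
    calc norm (μ - Complex.I * a) ≤ 2*T*r/a^2 := hmu
    _ = 2*T*(r/a^2) := by ring
  have hre : |μ.re| ≤ 2*T*P := by
    have h1 : (μ - Complex.I * (a:ℂ)).re = μ.re := by simp
    have h2 := Complex.abs_re_le_norm (μ - Complex.I * a)
    rw [h1] at h2
    linarith
  have himb : |μ.im - a| ≤ 2*T*P := by
    have h1 : (μ - Complex.I * (a:ℂ)).im = μ.im - a := by simp
    have h2 := Complex.abs_im_le_norm (μ - Complex.I * a)
    rw [h1] at h2
    linarith
  have himpos : 0 < μ.im := by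
    have := him μ hμK
    linarith
  refine ⟨μ, hl0, himpos, ?_, ?_, ?_⟩
  · have h1 : |μ.re + 1/2 * P * T| ≤ |μ.re| + |1/2 * P * T| := abs_add_le _ _
    have h2 : |1/2 * P * T| = 1/2 * P * T := abs_of_pos (by positivity)
    nlinarith [abs_nonneg μ.re]
  · have : 2*T*P ≤ 3*(T+1)*Q := by nlinarith
    linarith
  · rw [hℓ]
    have hconj : (∑' k, (c k : ℂ) / ((starRingEnd ℂ) μ + (γs k : ℂ)))
        = (starRingEnd ℂ) (F μ) := by
      rw [hFdef]
      simp only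
      rw [show ((starRingEnd ℂ) (∑' k, (c k : ℂ) / (μ + (γs k : ℂ))))
          = ∑' k, (starRingEnd ℂ) ((c k : ℂ) / (μ + (γs k : ℂ))) from tsum_star]
      congr 1
      funext k
      rw [map_div₀, map_add, Complex.conj_ofReal, Complex.conj_ofReal]
    rw [hconj, ← hrdef]
    have h1 : ((starRingEnd ℂ) μ)^2 + (a:ℂ)^2 - (r:ℂ) * (starRingEnd ℂ) (F μ)
        = (starRingEnd ℂ) (μ^2 + (a:ℂ)^2 - (r:ℂ) * F μ) := by
      rw [map_sub, map_add, map_pow, map_pow, map_mul, Complex.conj_ofReal, Complex.conj_ofReal]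
    rw [h1, hzero, map_zero]
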